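/- Let Φ be a trace-preserving positive linear map on M_d(ℂ) with a unique fixed density matrix ρ∞ and suppose there exist constants C, γ > 0 such that ‖Φ^n(ρ) - ρ∞‖₁ ≤ C e^{-γn} for all density matrices ρ and all n ≥ 0. Then for any other trace-preserving map Φ' with ‖Φ' - Φ‖_{1→1} ≤ ε having a fixed density matrix ρ'∞, one has ‖ρ'∞ - ρ∞‖₁ ≤ C e^{-γn} + nε for all n, and hence, optimizing over n, ‖ρ'∞ - ρ∞‖₁ ≤ inf_{n≥0} (C e^{-γn} + nε). -/

import Mathlib

open Matrix
open scoped ComplexOrder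

/-- The square root of a positive semidefinite matrix, as `Matrix.PosSemidef.sqrt` was defined
in the older Mathlib (removed since). -/
noncomputable def Matrix.PosSemidef.sqrt {n 𝕜 : Type*} [Fintype n] [RCLike 𝕜] [DecidableEq n]
    {A : Matrix n n 𝕜} (hA : A.PosSemidef) : Matrix n n 𝕜 :=
  (hA.1.eigenvectorUnitary : Matrix n n 𝕜) *
    diagonal (fun i => ((Real.sqrt (hA.1.eigenvalues i) : ℝ) : 𝕜)) *
    (star hA.1.eigenvectorUnitary : Matrix n n 𝕜)

/-- The trace norm `‖X‖₁ = Tr √(XᴴX)` of a complex matrix. -/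
noncomputable def traceNorm {d : ℕ} (X : Matrix (Fin d) (Fin d) ℂ) : ℝ :=
  ((Matrix.posSemidef_conjTranspose_mul_self X).sqrt.trace).re

section helpers

variable {d : ℕ}

open scoped MatrixOrder in
private lemma sqrt_eq_CFC {A : Matrix (Fin d) (Fin d) ℂ} (hA : A.PosSemidef) :
    hA.sqrt = CFC.sqrt A := by
  rw [CFC.sqrt_eq_real_sqrt A hA.nonneg, cfcₙ_eq_cfc, hA.1.cfc_eq, IsHermitian.cfc,
    Unitary.conjStarAlgAut_apply]
  rfl

open scoped MatrixOrder in
private lemma eq_sqrt_of_sq_eq' {A S : Matrix (Fin d) (Fin d) ℂ} (hS : S.PosSemidef)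
    (hA : A.PosSemidef) (h : S ^ 2 = A) : S = hA.sqrt := by
  rw [sqrt_eq_CFC]
  exact (CFC.sqrt_unique (by rw [← sq, h]) hS.nonneg).symm

private lemma traceNorm_eq_of_sq {X S : Matrix (Fin d) (Fin d) ℂ} (hS : S.PosSemidef)
    (h : S ^ 2 = Xᴴ * X) : traceNorm X = S.trace.re := by
  unfold traceNorm
  rw [← eq_sqrt_of_sq_eq' hS (Matrix.posSemidef_conjTranspose_mul_self X) h]

private lemma traceNorm_psd {X : Matrix (Fin d) (Fin d) ℂ} (hX : X.PosSemidef) :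
    traceNorm X = X.trace.re :=
  traceNorm_eq_of_sq hX (by rw [pow_two, hX.1])

private lemma traceNorm_zero : traceNorm (0 : Matrix (Fin d) (Fin d) ℂ) = 0 := by
  rw [traceNorm_psd Matrix.PosSemidef.zero]; simp

/-- conjugation of a real diagonal by the eigenvector unitary -/
private noncomputable def conjDiag {X : Matrix (Fin d) (Fin d) ℂ} (hX : X.IsHermitian)
    (f : Fin d → ℝ) : Matrix (Fin d) (Fin d) ℂ :=
  (hX.eigenvectorUnitary : Matrix (Fin d) (Fin d) ℂ) *
    Matrix.diagonal (fun i => ((f i : ℝ) : ℂ)) *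
    star (hX.eigenvectorUnitary : Matrix (Fin d) (Fin d) ℂ)

private lemma conjDiag_psd {X : Matrix (Fin d) (Fin d) ℂ} (hX : X.IsHermitian)
    (f : Fin d → ℝ) (hf : ∀ i, 0 ≤ f i) : (conjDiag hX f).PosSemidef := by
  have hdiag : (Matrix.diagonal (fun i => ((f i : ℝ) : ℂ))).PosSemidef := by
    refine Matrix.posSemidef_diagonal_iff.mpr fun i => ?_
    exact_mod_cast hf i
  simpa [conjDiag, Matrix.star_eq_conjTranspose] using
    hdiag.mul_mul_conjTranspose_same (hX.eigenvectorUnitary : Matrix (Fin d) (Fin d) ℂ)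

private lemma conjDiag_trace_re {X : Matrix (Fin d) (Fin d) ℂ} (hX : X.IsHermitian)
    (f : Fin d → ℝ) : (conjDiag hX f).trace.re = ∑ i, f i := by
  have hU : star (hX.eigenvectorUnitary : Matrix (Fin d) (Fin d) ℂ) *
      (hX.eigenvectorUnitary : Matrix (Fin d) (Fin d) ℂ) = 1 :=
    Unitary.coe_star_mul_self _
  rw [conjDiag, Matrix.trace_mul_cycle, hU, one_mul, Matrix.trace_diagonal]
  simp [Complex.re_sum]

private lemma conjDiag_mul {X : Matrix (Fin d) (Fin d) ℂ} (hX : X.IsHermitian)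
    (f g : Fin d → ℝ) : conjDiag hX f * conjDiag hX g = conjDiag hX (fun i => f i * g i) := by
  have hU : star (hX.eigenvectorUnitary : Matrix (Fin d) (Fin d) ℂ) *
      (hX.eigenvectorUnitary : Matrix (Fin d) (Fin d) ℂ) = 1 :=
    Unitary.coe_star_mul_self _
  have hU' : ∀ M : Matrix (Fin d) (Fin d) ℂ,
      star (hX.eigenvectorUnitary : Matrix (Fin d) (Fin d) ℂ) *
        ((hX.eigenvectorUnitary : Matrix (Fin d) (Fin d) ℂ) * M) = M := fun M => by
    rw [← Matrix.mul_assoc, hU, one_mul]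
  simp only [conjDiag, Matrix.mul_assoc, hU']
  rw [← Matrix.mul_assoc (Matrix.diagonal _) (Matrix.diagonal _), Matrix.diagonal_mul_diagonal]
  push_cast
  rfl

private lemma conjDiag_sub {X : Matrix (Fin d) (Fin d) ℂ} (hX : X.IsHermitian)
    (f g : Fin d → ℝ) : conjDiag hX f - conjDiag hX g = conjDiag hX (fun i => f i - g i) := by
  simp only [conjDiag, ← Matrix.sub_mul, ← Matrix.mul_sub, Matrix.diagonal_sub]
  push_cast
  rfl

private lemma conjDiag_eigenvalues {X : Matrix (Fin d) (Fin d) ℂ} (hX : X.IsHermitian) :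
    conjDiag hX hX.eigenvalues = X := by
  rw [conjDiag]
  exact (hX.spectral_theorem).symm

private lemma traceNorm_hermitian {X : Matrix (Fin d) (Fin d) ℂ} (hX : X.IsHermitian) :
    traceNorm X = ∑ i, |hX.eigenvalues i| := by
  have hpsd := conjDiag_psd hX (fun i => |hX.eigenvalues i|) (fun i => abs_nonneg _)
  have hsq : conjDiag hX (fun i => |hX.eigenvalues i|) ^ 2 = Xᴴ * X := by
    have hfun : (fun i => |hX.eigenvalues i| * |hX.eigenvalues i|) =
        fun i => hX.eigenvalues i * hX.eigenvalues i := by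
      funext i; rw [← abs_mul, abs_mul_self]
    rw [pow_two, conjDiag_mul, hfun, hX.eq]
    conv_rhs => rw [← conjDiag_eigenvalues hX]
    rw [conjDiag_mul]
  rw [traceNorm_eq_of_sq hpsd hsq, conjDiag_trace_re]

private lemma traceNorm_le_of_sub {X P Q : Matrix (Fin d) (Fin d) ℂ} (hX : X.IsHermitian)
    (hP : P.PosSemidef) (hQ : Q.PosSemidef) (hPQ : X = P - Q) :
    traceNorm X ≤ P.trace.re + Q.trace.re := by
  classical
  set U : Matrix (Fin d) (Fin d) ℂ := (hX.eigenvectorUnitary : Matrix (Fin d) (Fin d) ℂ) with hUdef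
  have hU2 : U * star U = 1 := Unitary.coe_mul_star_self _
  set P' : Matrix (Fin d) (Fin d) ℂ := star U * P * U with hP'def
  set Q' : Matrix (Fin d) (Fin d) ℂ := star U * Q * U with hQ'def
  have hP' : P'.PosSemidef := by
    simpa [hP'def, Matrix.star_eq_conjTranspose] using hP.conjTranspose_mul_mul_same U
  have hQ' : Q'.PosSemidef := by
    simpa [hQ'def, Matrix.star_eq_conjTranspose] using hQ.conjTranspose_mul_mul_same U
  have h1 : star U * X * U = P' - Q' := by
    have h := congrArg (fun M => star U * M * U) hPQ
    simpa only [Matrix.mul_sub, Matrix.sub_mul] using h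
  have hdiag : Matrix.diagonal (RCLike.ofReal ∘ hX.eigenvalues) = P' - Q' := by
    rw [← h1]
    rw [eq_comm, ← hX.conjStarAlgAut_star_eigenvectorUnitary, Unitary.conjStarAlgAut_apply]
    simp [hUdef, Unitary.coe_star]
  have hentry : ∀ i, ((hX.eigenvalues i : ℝ) : ℂ) = P' i i - Q' i i := by
    intro i
    have := congrFun (congrFun hdiag i) i
    simpa [Matrix.diagonal_apply_eq, Matrix.sub_apply] using this
  have hdiagP : ∀ i, 0 ≤ (P' i i).re ∧ (P' i i).im = 0 := by
    intro i
    have h0 : (0 : ℂ) ≤ P' i i := by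
      exact hP'.diag_nonneg
    rw [Complex.le_def] at h0
    exact ⟨h0.1, h0.2.symm⟩
  have hdiagQ : ∀ i, 0 ≤ (Q' i i).re ∧ (Q' i i).im = 0 := by
    intro i
    have h0 : (0 : ℂ) ≤ Q' i i := by
      exact hQ'.diag_nonneg
    rw [Complex.le_def] at h0
    exact ⟨h0.1, h0.2.symm⟩
  have habs : ∀ i, |hX.eigenvalues i| ≤ (P' i i).re + (Q' i i).re := by
    intro i
    have h1 : hX.eigenvalues i = (P' i i).re - (Q' i i).re := by
      have := congrArg Complex.re (hentry i)
      simpa using this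
    rw [h1]
    calc |(P' i i).re - (Q' i i).re| ≤ |(P' i i).re| + |(Q' i i).re| := abs_sub _ _
      _ = (P' i i).re + (Q' i i).re := by
          rw [abs_of_nonneg (hdiagP i).1, abs_of_nonneg (hdiagQ i).1]
  have htrP : P'.trace = P.trace := by
    rw [hP'def, Matrix.trace_mul_cycle, hU2, one_mul]
  have htrQ : Q'.trace = Q.trace := by
    rw [hQ'def, Matrix.trace_mul_cycle, hU2, one_mul]
  rw [traceNorm_hermitian hX, ← htrP, ← htrQ]
  calc ∑ i, |hX.eigenvalues i| ≤ ∑ i, ((P' i i).re + (Q' i i).re) :=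
        Finset.sum_le_sum fun i _ => habs i
    _ = P'.trace.re + Q'.trace.re := by
        rw [Finset.sum_add_distrib, Matrix.trace, Matrix.trace, Complex.re_sum, Complex.re_sum]
        rfl

private lemma jordan {X : Matrix (Fin d) (Fin d) ℂ} (hX : X.IsHermitian) :
    ∃ P Q : Matrix (Fin d) (Fin d) ℂ, P.PosSemidef ∧ Q.PosSemidef ∧ X = P - Q ∧
      P.trace.re + Q.trace.re = traceNorm X := by
  refine ⟨conjDiag hX (fun i => max (hX.eigenvalues i) 0),
    conjDiag hX (fun i => max (-hX.eigenvalues i) 0),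
    conjDiag_psd hX _ (fun i => le_max_right _ _),
    conjDiag_psd hX _ (fun i => le_max_right _ _), ?_, ?_⟩
  · rw [conjDiag_sub]
    have hfun : (fun i => max (hX.eigenvalues i) 0 - max (-hX.eigenvalues i) 0) =
        hX.eigenvalues := by
      funext i; exact max_zero_sub_max_neg_zero_eq_self _
    rw [hfun, conjDiag_eigenvalues]
  · rw [conjDiag_trace_re, conjDiag_trace_re, traceNorm_hermitian hX, ← Finset.sum_add_distrib]
    congr 1
    funext i
    rcases le_total 0 (hX.eigenvalues i) with h | h
    · simp [max_eq_left, h, abs_of_nonneg h, max_eq_right (neg_nonpos_of_nonneg h)]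
    · simp [abs_of_nonpos h, max_eq_right h, max_eq_left (neg_nonneg_of_nonpos h)]

private lemma traceNorm_add_le {A B : Matrix (Fin d) (Fin d) ℂ} (hA : A.IsHermitian)
    (hB : B.IsHermitian) : traceNorm (A + B) ≤ traceNorm A + traceNorm B := by
  obtain ⟨P₁, Q₁, hP₁, hQ₁, hA', htA⟩ := jordan hA
  obtain ⟨P₂, Q₂, hP₂, hQ₂, hB', htB⟩ := jordan hB
  have h := traceNorm_le_of_sub (hA.add hB) (hP₁.add hP₂) (hQ₁.add hQ₂)
    (by rw [hA', hB']; abel)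
  rw [Matrix.trace_add, Matrix.trace_add, Complex.add_re, Complex.add_re] at h
  linarith

private lemma contraction (Φ : Module.End ℂ (Matrix (Fin d) (Fin d) ℂ))
    (hpos : ∀ X : Matrix (Fin d) (Fin d) ℂ, X.PosSemidef → (Φ X).PosSemidef)
    (hTP : ∀ X : Matrix (Fin d) (Fin d) ℂ, (Φ X).trace = X.trace)
    {X : Matrix (Fin d) (Fin d) ℂ} (hX : X.IsHermitian) :
    (Φ X).IsHermitian ∧ traceNorm (Φ X) ≤ traceNorm X := by
  obtain ⟨P, Q, hP, hQ, hXPQ, htr⟩ := jordan hX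
  have hΦ : Φ X = Φ P - Φ Q := by rw [hXPQ, map_sub]
  have hherm : (Φ X).IsHermitian := by
    rw [hΦ]; exact (hpos P hP).1.sub (hpos Q hQ).1
  refine ⟨hherm, ?_⟩
  have h := traceNorm_le_of_sub hherm (hpos P hP) (hpos Q hQ) hΦ
  rw [hTP P, hTP Q] at h
  linarith

end helpers

/-- Stability of exponentially mixing channels: if a positive trace-preserving
map `Φ` converges to its unique fixed state `ρ∞` at rate `C e^{-γ n}` in trace
norm, and `Φ'` is another trace-preserving map within `ε` of `Φ` in the induced
trace-norm distance, with fixed state `ρ'∞`, then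
`‖ρ'∞ - ρ∞‖₁ ≤ C e^{-γ n} + n ε` for every `n`, and hence
`‖ρ'∞ - ρ∞‖₁ ≤ inf_n (C e^{-γ n} + n ε)`. -/
theorem mixing_stability (d : ℕ) (C γ ε : ℝ) (hC : 0 < C) (hγ : 0 < γ)
    (hε : 0 ≤ ε)
    (Φ Φ' : Module.End ℂ (Matrix (Fin d) (Fin d) ℂ))
    (hpos : ∀ X : Matrix (Fin d) (Fin d) ℂ, X.PosSemidef → (Φ X).PosSemidef)
    (hTP : ∀ X : Matrix (Fin d) (Fin d) ℂ, (Φ X).trace = X.trace)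
    (hTP' : ∀ X : Matrix (Fin d) (Fin d) ℂ, (Φ' X).trace = X.trace)
    (ρinf ρinf' : Matrix (Fin d) (Fin d) ℂ)
    (hρ : ρinf.PosSemidef) (hρtr : ρinf.trace = 1)
    (hρ' : ρinf'.PosSemidef) (hρtr' : ρinf'.trace = 1)
    (hfix : Φ ρinf = ρinf) (hfix' : Φ' ρinf' = ρinf')
    (hconv : ∀ ρ : Matrix (Fin d) (Fin d) ℂ, ρ.PosSemidef → ρ.trace = 1 →
      ∀ n : ℕ, traceNorm ((Φ ^ n) ρ - ρinf) ≤ C * Real.exp (-γ * n))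
    (hclose : ∀ X : Matrix (Fin d) (Fin d) ℂ,
      traceNorm (Φ' X - Φ X) ≤ ε * traceNorm X) :
    (∀ n : ℕ, traceNorm (ρinf' - ρinf) ≤ C * Real.exp (-γ * n) + n * ε) ∧
    traceNorm (ρinf' - ρinf) ≤ ⨅ n : ℕ, (C * Real.exp (-γ * n) + n * ε) := by
  have hstate' : traceNorm ρinf' = 1 := by
    rw [traceNorm_psd hρ', hρtr', Complex.one_re]
  -- the perturbation step
  have hδ : traceNorm (ρinf' - Φ ρinf') ≤ ε := by
    have h := hclose ρinf'
    rw [hfix', hstate', mul_one] at h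
    exact h
  -- powers of Φ preserve states
  have hpow : ∀ n : ℕ, ((Φ ^ n) ρinf').PosSemidef ∧ ((Φ ^ n) ρinf').trace = 1 := by
    intro n
    induction n with
    | zero => simpa using ⟨hρ', hρtr'⟩
    | succ n ih =>
      have hs : (Φ ^ (n + 1)) ρinf' = Φ ((Φ ^ n) ρinf') := by
        rw [pow_succ', Module.End.mul_apply]
      rw [hs]
      exact ⟨hpos _ ih.1, by rw [hTP, ih.2]⟩
  -- telescoping bound
  have key : ∀ n : ℕ, traceNorm (ρinf' - (Φ ^ n) ρinf') ≤ n * ε := by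
    intro n
    induction n with
    | zero => simpa using le_of_eq traceNorm_zero
    | succ n ih =>
      have hs : (Φ ^ (n + 1)) ρinf' = Φ ((Φ ^ n) ρinf') := by
        rw [pow_succ', Module.End.mul_apply]
      have hsplit : ρinf' - (Φ ^ (n + 1)) ρinf' =
          (ρinf' - Φ ρinf') + Φ (ρinf' - (Φ ^ n) ρinf') := by
        rw [hs, map_sub]; abel
      have hHA : (ρinf' - Φ ρinf').IsHermitian := hρ'.1.sub (hpos _ hρ').1
      have hHin : (ρinf' - (Φ ^ n) ρinf').IsHermitian := hρ'.1.sub (hpow n).1.1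
      obtain ⟨hHB, hcontr⟩ := contraction Φ hpos hTP hHin
      calc traceNorm (ρinf' - (Φ ^ (n + 1)) ρinf')
          = traceNorm ((ρinf' - Φ ρinf') + Φ (ρinf' - (Φ ^ n) ρinf')) := by rw [hsplit]
        _ ≤ traceNorm (ρinf' - Φ ρinf') + traceNorm (Φ (ρinf' - (Φ ^ n) ρinf')) :=
            traceNorm_add_le hHA hHB
        _ ≤ ε + n * ε := add_le_add hδ (hcontr.trans ih)
        _ = (n + 1 : ℕ) * ε := by push_cast; ring
  have main : ∀ n : ℕ, traceNorm (ρinf' - ρinf) ≤ C * Real.exp (-γ * n) + n * ε := by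
    intro n
    have hsplit : ρinf' - ρinf = (ρinf' - (Φ ^ n) ρinf') + ((Φ ^ n) ρinf' - ρinf) := by abel
    have hH1 : (ρinf' - (Φ ^ n) ρinf').IsHermitian := hρ'.1.sub (hpow n).1.1
    have hH2 : ((Φ ^ n) ρinf' - ρinf).IsHermitian := (hpow n).1.1.sub hρ.1
    have hc := hconv ρinf' hρ' hρtr' n
    calc traceNorm (ρinf' - ρinf)
        = traceNorm ((ρinf' - (Φ ^ n) ρinf') + ((Φ ^ n) ρinf' - ρinf)) := by rw [← hsplit]
      _ ≤ traceNorm (ρinf' - (Φ ^ n) ρinf') + traceNorm ((Φ ^ n) ρinf' - ρinf) :=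
          traceNorm_add_le hH1 hH2
      _ ≤ n * ε + C * Real.exp (-γ * n) := add_le_add (key n) hc
      _ = C * Real.exp (-γ * n) + n * ε := by ring
  exact ⟨main, le_ciInf main⟩
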